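/- arXiv:2011.10458 — 4 statements merged into one kernel-verified Lean document; each statement's English description precedes it below -/
import Mathlib

section
/- Suppose a complex unit hypergraph is d-regular (every vertex has degree d > 0) and r-uniform (every edge has size r > 0). Then the normalized Laplacian of the dual hypergraph satisfies L(G*) = (d/r) · L*(G) and the dual normalized Laplacian of the dual hypergraph satisfies L*(G*) = (d/r) · L(G). -/
open Matrix

/-- Degree of vertex `i`: the number of edges `k` with `ω i k ≠ 0`. -/
noncomputable def deg {n m : ℕ} (ω : Fin n → Fin m → ℂ) (i : Fin n) : ℕ :=
  Nat.card {k : Fin m // ω i k ≠ 0}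

/-- Size of edge `k`: the number of vertices `i` with `ω i k ≠ 0`. -/
noncomputable def edgeSize {n m : ℕ} (ω : Fin n → Fin m → ℂ) (k : Fin m) : ℕ :=
  Nat.card {i : Fin n // ω i k ≠ 0}

/-- Incidence matrix of a complex unit hypergraph. -/
noncomputable def incM {n m : ℕ} (ω : Fin n → Fin m → ℂ) : Matrix (Fin n) (Fin m) ℂ :=
  Matrix.of ω

/-- Degree matrix. -/
noncomputable def degM {n m : ℕ} (ω : Fin n → Fin m → ℂ) : Matrix (Fin n) (Fin n) ℂ :=
  Matrix.diagonal fun i => (deg ω i : ℂ)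

/-- Normalized Laplacian `L = D⁻¹ B Bᴴ`. -/
noncomputable def normLap {n m : ℕ} (ω : Fin n → Fin m → ℂ) : Matrix (Fin n) (Fin n) ℂ :=
  (degM ω)⁻¹ * (incM ω * (incM ω)ᴴ)

/-- Dual normalized Laplacian `L* = Bᴴ D⁻¹ B`. -/
noncomputable def dualNormLap {n m : ℕ} (ω : Fin n → Fin m → ℂ) :
    Matrix (Fin m) (Fin m) ℂ :=
  (incM ω)ᴴ * (degM ω)⁻¹ * incM ω

/-- Incidence function of the dual hypergraph: `ω*(k, i) = conj (ω i k)`. -/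
noncomputable def dualOmega {n m : ℕ} (ω : Fin n → Fin m → ℂ) :
    Fin m → Fin n → ℂ :=
  fun k i => (starRingEnd ℂ) (ω i k)

/-- If `G` is `d`-regular and `r`-uniform (with `d, r > 0`), then
`L(G*) = (d/r) • L*(G)` and `L*(G*) = (d/r) • L(G)`. -/
theorem stmt6 (n m : ℕ) (ω : Fin n → Fin m → ℂ)
    (hω : ∀ i k, ω i k = 0 ∨ ‖ω i k‖ = 1)
    (d r : ℕ) (hd : 0 < d) (hr : 0 < r)
    (hreg : ∀ i, deg ω i = d) (hunif : ∀ k, edgeSize ω k = r) :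
    normLap (dualOmega ω) = ((d : ℂ) / (r : ℂ)) • dualNormLap ω ∧
    dualNormLap (dualOmega ω) = ((d : ℂ) / (r : ℂ)) • normLap ω := by

  have hB : incM (dualOmega ω) = (incM ω)ᴴ := by
    ext k i
    simp [incM, dualOmega, Matrix.conjTranspose_apply]
  have hdeg : ∀ k, deg (dualOmega ω) k = r := fun k => by
    rw [← hunif k]
    unfold deg edgeSize
    exact Nat.card_congr (Equiv.subtypeEquivRight fun i => by
      simp [dualOmega])
  have hD : degM ω = (d : ℂ) • 1 := by
    unfold degM
    simp only [hreg]
    exact (Matrix.smul_one_eq_diagonal _).symm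
  have hDdual : degM (dualOmega ω) = (r : ℂ) • 1 := by
    unfold degM
    simp only [hdeg]
    exact (Matrix.smul_one_eq_diagonal _).symm
  have hdne : (d : ℂ) ≠ 0 := Nat.cast_ne_zero.mpr hd.ne'
  have hrne : (r : ℂ) ≠ 0 := Nat.cast_ne_zero.mpr hr.ne'
  have hinvD : (degM ω)⁻¹ = (d : ℂ)⁻¹ • 1 := by
    rw [hD]
    apply Matrix.inv_eq_right_inv
    rw [Matrix.smul_mul, Matrix.mul_smul, smul_smul, one_mul,
      mul_inv_cancel₀ hdne, one_smul]
  have hinvDdual : (degM (dualOmega ω))⁻¹ = (r : ℂ)⁻¹ • 1 := by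
    rw [hDdual]
    apply Matrix.inv_eq_right_inv
    rw [Matrix.smul_mul, Matrix.mul_smul, smul_smul, one_mul,
      mul_inv_cancel₀ hrne, one_smul]
  constructor
  · rw [normLap, dualNormLap, hB, hinvDdual, hinvD, Matrix.conjTranspose_conjTranspose]
    simp only [Matrix.smul_mul, Matrix.mul_smul, Matrix.one_mul, Matrix.mul_one,
      smul_smul, Matrix.mul_assoc]
    congr 1
    field_simp
  · rw [dualNormLap, normLap, hB, hinvDdual, hinvD, Matrix.conjTranspose_conjTranspose]
    simp only [Matrix.smul_mul, Matrix.mul_smul, Matrix.one_mul, Matrix.mul_one,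
      smul_smul, Matrix.mul_assoc]
    congr 1
    field_simp
end

section
/- Let G be a complex unit hypergraph on n vertices and m edges, and let Ĝ be obtained from G by weakly deleting r edges, i.e., restricting ω to a subset F of m - r edges, so that K(Ĝ) = B_F (B_F)ᴴ where B_F consists of the columns of B indexed by F. Then λ_j(K(Ĝ)) ≤ λ_j(K(G)) for all j ∈ {1, …, n}, and λ_{j-r}(K(G)) ≤ λ_j(K(Ĝ)) for all j ∈ {r+1, …, n}. -/
open Matrix
open scoped InnerProductSpace

/-- The eigenvalues of a Hermitian matrix, listed with multiplicity in
nondecreasing order. -/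
noncomputable def sortedEigs {N : ℕ} {M : Matrix (Fin N) (Fin N) ℂ}
    (h : M.IsHermitian) : Fin N → ℝ :=
  h.eigenvalues ∘ Tuple.sort h.eigenvalues

/-- mulVec as a map on EuclideanSpace -/
noncomputable def mulVecE {N : ℕ} (M : Matrix (Fin N) (Fin N) ℂ)
    (x : EuclideanSpace ℂ (Fin N)) : EuclideanSpace ℂ (Fin N) :=
  WithLp.toLp 2 (M *ᵥ x)

variable {N : ℕ} {M : Matrix (Fin N) (Fin N) ℂ}

/-- eigenbasis reordered so eigenvalues are nondecreasing -/
noncomputable def sortedBasis (hM : M.IsHermitian) :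
    OrthonormalBasis (Fin N) ℂ (EuclideanSpace ℂ (Fin N)) :=
  hM.eigenvectorBasis.reindex (Tuple.sort hM.eigenvalues).symm

lemma sortedBasis_apply (hM : M.IsHermitian) (i : Fin N) :
    sortedBasis hM i = hM.eigenvectorBasis (Tuple.sort hM.eigenvalues i) := by
  simp [sortedBasis]

lemma mono_sortedEigs (hM : M.IsHermitian) : Monotone (sortedEigs hM) :=
  Tuple.monotone_sort _

lemma mulVec_sortedBasis (hM : M.IsHermitian) (i : Fin N) :
    mulVecE M (sortedBasis hM i) = (sortedEigs hM i : ℝ) • (sortedBasis hM i) := by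
  rw [sortedBasis_apply]
  show WithLp.toLp 2 (M *ᵥ _) = _
  rw [hM.mulVec_eigenvectorBasis (Tuple.sort hM.eigenvalues i)]
  rfl

lemma hermInner (hM : M.IsHermitian) (x y : EuclideanSpace ℂ (Fin N)) :
    ⟪x, mulVecE M y⟫_ℂ = ⟪mulVecE M x, y⟫_ℂ := by
  rw [EuclideanSpace.inner_eq_star_dotProduct, EuclideanSpace.inner_eq_star_dotProduct]
  show (M *ᵥ y.ofLp) ⬝ᵥ star x.ofLp = y.ofLp ⬝ᵥ star (M *ᵥ x.ofLp)
  rw [star_mulVec, hM.eq, dotProduct_comm y.ofLp, ← dotProduct_mulVec, dotProduct_comm]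

lemma inner_sortedBasis_mulVec (hM : M.IsHermitian) (i : Fin N)
    (x : EuclideanSpace ℂ (Fin N)) :
    ⟪sortedBasis hM i, mulVecE M x⟫_ℂ
      = (sortedEigs hM i : ℂ) * ⟪sortedBasis hM i, x⟫_ℂ := by
  rw [hermInner hM, mulVec_sortedBasis hM i, RCLike.real_smul_eq_coe_smul (K := ℂ),
    inner_smul_left]
  simp

lemma inner_expand (b : OrthonormalBasis (Fin N) ℂ (EuclideanSpace ℂ (Fin N)))
    (x y : EuclideanSpace ℂ (Fin N)) :
    ⟪x, y⟫_ℂ = ∑ i, (starRingEnd ℂ) ⟪b i, x⟫_ℂ * ⟪b i, y⟫_ℂ := by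
  conv_lhs => rw [← b.sum_repr' x]
  rw [sum_inner]
  simp [inner_smul_left]

lemma quad_expand (hM : M.IsHermitian) (x : EuclideanSpace ℂ (Fin N)) :
    RCLike.re ⟪x, mulVecE M x⟫_ℂ
      = ∑ i, sortedEigs hM i * ‖⟪sortedBasis hM i, x⟫_ℂ‖ ^ 2 := by
  rw [inner_expand (sortedBasis hM), map_sum]
  refine Finset.sum_congr rfl fun i _ => ?_
  rw [inner_sortedBasis_mulVec hM i x]
  set d := ⟪sortedBasis hM i, x⟫_ℂ
  have h1 : (starRingEnd ℂ) d * ((sortedEigs hM i : ℂ) * d)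
      = (sortedEigs hM i : ℂ) * ((starRingEnd ℂ) d * d) := by ring
  rw [h1, RCLike.conj_mul, ← RCLike.ofReal_pow]
  simp [← Complex.ofReal_pow]

lemma norm_expand (b : OrthonormalBasis (Fin N) ℂ (EuclideanSpace ℂ (Fin N)))
    (x : EuclideanSpace ℂ (Fin N)) :
    ‖x‖ ^ 2 = ∑ i, ‖⟪b i, x⟫_ℂ‖ ^ 2 := by
  rw [← inner_self_eq_norm_sq (𝕜 := ℂ), inner_expand b x x, map_sum]
  refine Finset.sum_congr rfl fun i _ => ?_
  rw [RCLike.conj_mul, ← RCLike.ofReal_pow]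
  simp [← Complex.ofReal_pow]

lemma lemA (hM : M.IsHermitian) (j : Fin N) (S : Submodule ℂ (EuclideanSpace ℂ (Fin N)))
    (hS : (j : ℕ) + 1 ≤ Module.finrank ℂ S) :
    ∃ x, x ∈ S ∧ x ≠ 0 ∧
      sortedEigs hM j * ‖x‖ ^ 2 ≤ RCLike.re ⟪x, mulVecE M x⟫_ℂ := by
  classical
  let ψ : EuclideanSpace ℂ (Fin N) →ₗ[ℂ] (Fin (j : ℕ) → ℂ) :=
    LinearMap.pi fun i => (innerSL ℂ (sortedBasis hM (Fin.castLE j.isLt.le i))).toLinearMap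
  have hEdim : Module.finrank ℂ (EuclideanSpace ℂ (Fin N)) = N := finrank_euclideanSpace_fin
  have hker : N - (j : ℕ) ≤ Module.finrank ℂ (LinearMap.ker ψ) := by
    have h1 := LinearMap.finrank_range_add_finrank_ker ψ
    have h2 : Module.finrank ℂ (LinearMap.range ψ) ≤ (j : ℕ) := by
      have := Submodule.finrank_le (LinearMap.range ψ)
      simpa [Module.finrank_fin_fun] using this
    omega
  have hfin := Submodule.finrank_sup_add_finrank_inf_eq S (LinearMap.ker ψ)
  have hsup : Module.finrank ℂ ((S ⊔ LinearMap.ker ψ) :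
      Submodule ℂ (EuclideanSpace ℂ (Fin N))) ≤ N :=
    le_trans (Submodule.finrank_le _) (le_of_eq hEdim)
  have hpos : 0 < Module.finrank ℂ ((S ⊓ LinearMap.ker ψ) :
      Submodule ℂ (EuclideanSpace ℂ (Fin N))) := by omega
  haveI := Module.finrank_pos_iff.mp hpos
  obtain ⟨y, hy⟩ := exists_ne (0 : ↥(S ⊓ LinearMap.ker ψ))
  have hxS : (y : EuclideanSpace ℂ (Fin N)) ∈ S := y.2.1
  have hxK : (y : EuclideanSpace ℂ (Fin N)) ∈ LinearMap.ker ψ := y.2.2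
  have hxne : (y : EuclideanSpace ℂ (Fin N)) ≠ 0 := by
    simpa [Submodule.coe_eq_zero] using hy
  refine ⟨y, hxS, hxne, ?_⟩
  have hx0 : ∀ i : Fin N, (i : ℕ) < (j : ℕ) →
      ⟪sortedBasis hM i, (y : EuclideanSpace ℂ (Fin N))⟫_ℂ = 0 := by
    intro i hi
    have h := congrFun (LinearMap.mem_ker.mp hxK) ⟨(i : ℕ), hi⟩
    have hcast : Fin.castLE j.isLt.le (⟨(i : ℕ), hi⟩ : Fin (j : ℕ)) = i := rfl
    simpa [ψ, hcast] using h
  rw [quad_expand hM, norm_expand (sortedBasis hM), Finset.mul_sum]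
  refine Finset.sum_le_sum fun i _ => ?_
  by_cases hi : (i : ℕ) < (j : ℕ)
  · rw [hx0 i hi]; simp
  · refine mul_le_mul_of_nonneg_right (mono_sortedEigs hM ?_) (by positivity)
    exact Fin.le_def.mpr (not_lt.mp hi)

lemma lemB (hM : M.IsHermitian) (j : Fin N) :
    ∃ S : Submodule ℂ (EuclideanSpace ℂ (Fin N)), Module.finrank ℂ S = (j : ℕ) + 1 ∧
      ∀ x ∈ S, RCLike.re ⟪x, mulVecE M x⟫_ℂ ≤ sortedEigs hM j * ‖x‖ ^ 2 := by
  classical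
  have hle : (j : ℕ) + 1 ≤ N := j.isLt
  let g : Fin ((j : ℕ) + 1) → EuclideanSpace ℂ (Fin N) :=
    fun i => sortedBasis hM (Fin.castLE hle i)
  have hg : Orthonormal ℂ g :=
    (sortedBasis hM).orthonormal.comp _ (Fin.castLE_injective hle)
  refine ⟨Submodule.span ℂ (Set.range g), ?_, ?_⟩
  · rw [finrank_span_eq_card hg.linearIndependent, Fintype.card_fin]
  · intro x hx
    have hx0 : ∀ i : Fin N, (j : ℕ) < (i : ℕ) → ⟪sortedBasis hM i, x⟫_ℂ = 0 := by
      intro i hi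
      have hsub : Submodule.span ℂ (Set.range g) ≤
          LinearMap.ker (innerSL ℂ (sortedBasis hM i)).toLinearMap := by
        rw [Submodule.span_le]
        rintro _ ⟨i', rfl⟩
        have hne : i ≠ Fin.castLE hle i' := by
          intro h
          have : (i : ℕ) = (i' : ℕ) := by rw [h]; rfl
          have hi' : (i' : ℕ) < (j : ℕ) + 1 := i'.isLt
          omega
        simpa [g] using (sortedBasis hM).orthonormal.2 hne
      simpa using LinearMap.mem_ker.mp (hsub hx)
    rw [quad_expand hM, norm_expand (sortedBasis hM), Finset.mul_sum]
    refine Finset.sum_le_sum fun i _ => ?_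
    by_cases hi : (j : ℕ) < (i : ℕ)
    · rw [hx0 i hi]; simp
    · refine mul_le_mul_of_nonneg_right (mono_sortedEigs hM ?_) (by positivity)
      exact Fin.le_def.mpr (not_lt.mp hi)

lemma weyl1 {A K : Matrix (Fin N) (Fin N) ℂ} (hA : A.IsHermitian) (hK : K.IsHermitian)
    (h : ∀ x : EuclideanSpace ℂ (Fin N),
      RCLike.re ⟪x, mulVecE A x⟫_ℂ ≤ RCLike.re ⟪x, mulVecE K x⟫_ℂ)
    (j : Fin N) : sortedEigs hA j ≤ sortedEigs hK j := by
  obtain ⟨S, hSdim, hSle⟩ := lemB hK j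
  obtain ⟨x, hxS, hxne, hxge⟩ := lemA hA j S (le_of_eq hSdim.symm)
  have hnorm : (0 : ℝ) < ‖x‖ ^ 2 := pow_pos (norm_pos_iff.mpr hxne) 2
  exact le_of_mul_le_mul_right (hxge.trans ((h x).trans (hSle x hxS))) hnorm

lemma weyl2 {A K : Matrix (Fin N) (Fin N) ℂ} (hA : A.IsHermitian) (hK : K.IsHermitian)
    (r : ℕ) (W : Submodule ℂ (EuclideanSpace ℂ (Fin N)))
    (hW : N - r ≤ Module.finrank ℂ W)
    (hQ : ∀ x ∈ W, RCLike.re ⟪x, mulVecE K x⟫_ℂ = RCLike.re ⟪x, mulVecE A x⟫_ℂ)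
    (j j' : Fin N) (hrj : r ≤ (j : ℕ)) (hj' : (j' : ℕ) = (j : ℕ) - r) :
    sortedEigs hK j' ≤ sortedEigs hA j := by
  obtain ⟨S, hSdim, hSle⟩ := lemB hA j
  have hEdim : Module.finrank ℂ (EuclideanSpace ℂ (Fin N)) = N := finrank_euclideanSpace_fin
  have hfin := Submodule.finrank_sup_add_finrank_inf_eq S W
  have hsup : Module.finrank ℂ ((S ⊔ W) : Submodule ℂ (EuclideanSpace ℂ (Fin N))) ≤ N :=
    le_trans (Submodule.finrank_le _) (le_of_eq hEdim)
  have hj : (j : ℕ) < N := j.isLt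
  have hSW : (j' : ℕ) + 1 ≤ Module.finrank ℂ
      ((S ⊓ W) : Submodule ℂ (EuclideanSpace ℂ (Fin N))) := by omega
  obtain ⟨x, hxm, hxne, hxge⟩ := lemA hK j' (S ⊓ W) hSW
  have hnorm : (0 : ℝ) < ‖x‖ ^ 2 := pow_pos (norm_pos_iff.mpr hxne) 2
  have hchain : sortedEigs hK j' * ‖x‖ ^ 2 ≤ sortedEigs hA j * ‖x‖ ^ 2 := by
    calc sortedEigs hK j' * ‖x‖ ^ 2 ≤ RCLike.re ⟪x, mulVecE K x⟫_ℂ := hxge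
    _ = RCLike.re ⟪x, mulVecE A x⟫_ℂ := hQ x hxm.2
    _ ≤ sortedEigs hA j * ‖x‖ ^ 2 := hSle x hxm.1
  exact le_of_mul_le_mul_right hchain hnorm

lemma quad_BBH {n' m' : ℕ} (B : Matrix (Fin n') (Fin m') ℂ) (x : EuclideanSpace ℂ (Fin n')) :
    RCLike.re ⟪x, mulVecE (B * Bᴴ) x⟫_ℂ = ∑ k, ‖(Bᴴ *ᵥ (x : Fin n' → ℂ)) k‖ ^ 2 := by
  rw [show ⟪x, mulVecE (B * Bᴴ) x⟫_ℂ
      = star (x : Fin n' → ℂ) ⬝ᵥ ((B * Bᴴ) *ᵥ (x : Fin n' → ℂ)) from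
    (EuclideanSpace.inner_eq_star_dotProduct x (mulVecE (B * Bᴴ) x)).trans (dotProduct_comm _ _)]
  have key : star (x : Fin n' → ℂ) ⬝ᵥ ((B * Bᴴ) *ᵥ (x : Fin n' → ℂ))
      = star (Bᴴ *ᵥ (x : Fin n' → ℂ)) ⬝ᵥ (Bᴴ *ᵥ (x : Fin n' → ℂ)) := by
    rw [← mulVec_mulVec, dotProduct_mulVec, star_mulVec, conjTranspose_conjTranspose]
  rw [key, dotProduct]
  rw [map_sum]
  refine Finset.sum_congr rfl fun k _ => ?_
  simp only [Pi.star_apply]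
  rw [show star ((Bᴴ *ᵥ (x : Fin n' → ℂ)) k)
      = (starRingEnd ℂ) ((Bᴴ *ᵥ (x : Fin n' → ℂ)) k) from rfl,
    RCLike.conj_mul, ← RCLike.ofReal_pow]
  simp [← Complex.ofReal_pow]

/-- Interlacing for the Kirchhoff Laplacian under weak deletion of `r` edges:
if `Ĝ` keeps the edges indexed by an injection `f : Fin (m - r) → Fin m`, so that
`K(Ĝ) = B_F B_Fᴴ`, then `λ_j(K(Ĝ)) ≤ λ_j(K(G))` for all `j`, and
`λ_{j-r}(K(G)) ≤ λ_j(K(Ĝ))` for `j > r` (here stated with 0-based indices). -/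
theorem stmt8 (n m r : ℕ) (hr : r ≤ m) (ω : Fin n → Fin m → ℂ)
    (hω : ∀ i k, ω i k = 0 ∨ ‖ω i k‖ = 1)
    (f : Fin (m - r) → Fin m) (hf : Function.Injective f) :
    (∀ (j : ℕ) (hj : j < n),
      sortedEigs (Matrix.isHermitian_mul_conjTranspose_self
          (incM fun i k => ω i (f k))) ⟨j, hj⟩ ≤
        sortedEigs (Matrix.isHermitian_mul_conjTranspose_self (incM ω)) ⟨j, hj⟩) ∧
    (∀ (j : ℕ) (hj : j < n), r ≤ j →
      sortedEigs (Matrix.isHermitian_mul_conjTranspose_self (incM ω)) ⟨j - r, by omega⟩ ≤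
        sortedEigs (Matrix.isHermitian_mul_conjTranspose_self
          (incM fun i k => ω i (f k))) ⟨j, hj⟩) := by
  classical
  set B : Matrix (Fin n) (Fin m) ℂ := incM ω with hB
  set Bf : Matrix (Fin n) (Fin (m - r)) ℂ := incM (fun i k => ω i (f k)) with hBf
  have hA : (Bf * Bfᴴ).IsHermitian := Matrix.isHermitian_mul_conjTranspose_self Bf
  have hK : (B * Bᴴ).IsHermitian := Matrix.isHermitian_mul_conjTranspose_self B
  -- columns relation
  have col_eq : ∀ (x : EuclideanSpace ℂ (Fin n)) (k : Fin (m - r)),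
      (Bfᴴ *ᵥ (x : Fin n → ℂ)) k = (Bᴴ *ᵥ (x : Fin n → ℂ)) (f k) := by
    intro x k
    simp [hB, hBf, incM, Matrix.mulVec, dotProduct, Matrix.conjTranspose_apply]
  -- quadratic form inequality
  have hquadA : ∀ x : EuclideanSpace ℂ (Fin n),
      RCLike.re ⟪x, mulVecE (Bf * Bfᴴ) x⟫_ℂ
        = ∑ k ∈ Finset.univ.image f, ‖(Bᴴ *ᵥ (x : Fin n → ℂ)) k‖ ^ 2 := by
    intro x
    rw [quad_BBH, Finset.sum_image (fun a _ b _ h => hf h)]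
    exact Finset.sum_congr rfl fun k _ => by rw [col_eq x k]
  have hineq : ∀ x : EuclideanSpace ℂ (Fin n),
      RCLike.re ⟪x, mulVecE (Bf * Bfᴴ) x⟫_ℂ ≤ RCLike.re ⟪x, mulVecE (B * Bᴴ) x⟫_ℂ := by
    intro x
    rw [hquadA, quad_BBH]
    exact Finset.sum_le_sum_of_subset_of_nonneg (Finset.subset_univ _)
      (fun k _ _ => by positivity)
  -- the kernel subspace W
  set U : Finset (Fin m) := Finset.univ \ Finset.univ.image f with hU
  have hcardU : U.card = r := by
    rw [hU, Finset.card_sdiff_of_subset (Finset.subset_univ _), Finset.card_univ, Fintype.card_fin,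
      Finset.card_image_of_injective _ hf, Finset.card_univ, Fintype.card_fin]
    omega
  let φ : EuclideanSpace ℂ (Fin n) →ₗ[ℂ] (↥U → ℂ) :=
    LinearMap.pi fun k : ↥U =>
      ((LinearMap.proj (k : Fin m)).comp (Matrix.mulVecLin Bᴴ)).comp
        (WithLp.linearEquiv 2 ℂ (Fin n → ℂ)).toLinearMap
  set W : Submodule ℂ (EuclideanSpace ℂ (Fin n)) := LinearMap.ker φ with hW
  have hWdim : n - r ≤ Module.finrank ℂ W := by
    have h1 := LinearMap.finrank_range_add_finrank_ker φ
    have h2 : Module.finrank ℂ (LinearMap.range φ) ≤ r := by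
      have := Submodule.finrank_le (LinearMap.range φ)
      have h3 : Module.finrank ℂ (↥U → ℂ) = U.card := by
        rw [Module.finrank_pi, Fintype.card_coe]
      omega
    have hEdim : Module.finrank ℂ (EuclideanSpace ℂ (Fin n)) = n := finrank_euclideanSpace_fin
    rw [hW]
    omega
  have hQ : ∀ x ∈ W, RCLike.re ⟪x, mulVecE (B * Bᴴ) x⟫_ℂ
      = RCLike.re ⟪x, mulVecE (Bf * Bfᴴ) x⟫_ℂ := by
    intro x hx
    rw [quad_BBH, hquadA]
    have hzero : ∀ k ∈ U, ‖(Bᴴ *ᵥ (x : Fin n → ℂ)) k‖ ^ 2 = 0 := by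
      intro k hk
      have h := congrFun (LinearMap.mem_ker.mp hx) ⟨k, hk⟩
      have : (Bᴴ *ᵥ (x : Fin n → ℂ)) k = 0 := h
      rw [this]; simp
    rw [← Finset.sum_sdiff (Finset.subset_univ (Finset.univ.image f))]
    rw [Finset.sum_eq_zero hzero, zero_add]
  constructor
  · intro j hj
    exact weyl1 hA hK hineq ⟨j, hj⟩
  · intro j hj hrj
    exact weyl2 hA hK r W hWdim hQ ⟨j, hj⟩ ⟨j - r, by omega⟩ hrj rfl
end

section
/- Let Δ be the maximum vertex degree and ∇ the maximum edge size of a complex unit hypergraph with n ≥ 1 vertices. Then every eigenvalue λ of the adjacency matrix A satisfies |λ| ≤ Δ · (∇ - 1); i.e., the spectral radius ρ(A) ≤ Δ(∇ - 1). -/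
open Matrix

/-- Adjacency matrix. -/
noncomputable def adjM {n m : ℕ} (ω : Fin n → Fin m → ℂ) : Matrix (Fin n) (Fin n) ℂ :=
  Matrix.of fun i j => if i = j then 0 else -∑ k, ω i k * (starRingEnd ℂ) (ω j k)

lemma deg_eq {n m : ℕ} (ω : Fin n → Fin m → ℂ) (i : Fin n) :
    deg ω i = (Finset.univ.filter (fun k => ω i k ≠ 0)).card := by
  classical
  rw [deg, Nat.card_eq_fintype_card, Fintype.card_subtype]

lemma edgeSize_eq {n m : ℕ} (ω : Fin n → Fin m → ℂ) (k : Fin m) :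
    edgeSize ω k = (Finset.univ.filter (fun i => ω i k ≠ 0)).card := by
  classical
  rw [edgeSize, Nat.card_eq_fintype_card, Fintype.card_subtype]

/-- Every eigenvalue `λ` of the adjacency matrix satisfies `|λ| ≤ Δ(∇ - 1)`,
where `Δ` is the maximum degree and `∇` the maximum edge size. -/
theorem stmt14 (n m : ℕ) (hn : 0 < n) (ω : Fin n → Fin m → ℂ)
    (hω : ∀ i k, ω i k = 0 ∨ ‖ω i k‖ = 1)
    (hA : (adjM ω).IsHermitian) :
    ∀ i : Fin n, |hA.eigenvalues i| ≤
      ((Finset.univ.sup (deg ω) : ℕ) : ℝ) * (((Finset.univ.sup (edgeSize ω) : ℕ) : ℝ) - 1) := by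
  classical
  intro i
  set lam := hA.eigenvalues i with hlam
  -- eigenvector
  have hv := hA.mulVec_eigenvectorBasis i
  have hvne : (⇑(hA.eigenvectorBasis i) : Fin n → ℂ) ≠ 0 := by
    intro h
    exact hA.eigenvectorBasis.orthonormal.ne_zero i (by ext j; exact congrFun h j)
  have heig : Module.End.HasEigenvalue (Matrix.toLin' (adjM ω)) ((lam : ℂ)) := by
    apply Module.End.hasEigenvalue_of_hasEigenvector (x := (⇑(hA.eigenvectorBasis i) : Fin n → ℂ))
    refine ⟨Module.End.mem_eigenspace_iff.mpr ?_, hvne⟩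
    rw [Matrix.toLin'_apply, hv]
    ext j
    simp [Complex.real_smul, hlam]
  obtain ⟨k, hk⟩ := eigenvalue_mem_ball heig
  rw [Metric.mem_closedBall, dist_eq_norm] at hk
  have hdiag : adjM ω k k = 0 := by simp [adjM]
  rw [hdiag, sub_zero] at hk
  have habs : |lam| ≤ ∑ j ∈ Finset.univ.erase k, ‖adjM ω k j‖ := by
    simpa [Complex.norm_real, Real.norm_eq_abs] using hk
  -- case: all zero
  by_cases hz : ∀ i' k', ω i' k' = 0
  · have hrow : ∀ j ∈ Finset.univ.erase k, ‖adjM ω k j‖ = 0 := by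
      intro j hj
      have hkj : k ≠ j := fun h => (Finset.mem_erase.mp hj).1 h.symm
      simp [adjM, hkj, hz]
    have : |lam| ≤ 0 := habs.trans (le_of_eq (Finset.sum_eq_zero hrow))
    have hdeg0 : Finset.univ.sup (deg ω) = 0 := by
      apply Nat.eq_zero_of_le_zero
      apply Finset.sup_le
      intro i' _
      rw [deg_eq]
      simp [Finset.filter_eq_empty_iff, hz]
    rw [hdeg0]
    simpa using this
  · push_neg at hz
    obtain ⟨i0, k0, h0⟩ := hz
    -- ∇ ≥ 1
    have hnabla : 1 ≤ Finset.univ.sup (edgeSize ω) := by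
      refine le_trans ?_ (Finset.le_sup (Finset.mem_univ k0))
      rw [edgeSize_eq]
      exact Finset.card_pos.mpr ⟨i0, Finset.mem_filter.mpr ⟨Finset.mem_univ _, h0⟩⟩
    set Nb : ℝ := ((Finset.univ.sup (edgeSize ω) : ℕ) : ℝ) with hNb
    have hNb1 : (1 : ℝ) ≤ Nb := by rw [hNb]; exact_mod_cast hnabla
    -- norm of each entry in {0,1}
    have hnorm01 : ∀ i' k', ‖ω i' k'‖ = if ω i' k' = 0 then 0 else 1 := by
      intro i' k'
      rcases hω i' k' with h | h
      · simp [h]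
      · rw [h]; split_ifs with h' <;> simp_all
    -- column sums equal edge sizes
    have hcol : ∀ k' : Fin m, ∑ j, ‖ω j k'‖ = (edgeSize ω k' : ℝ) := by
      intro k'
      rw [edgeSize_eq]
      rw [Finset.sum_congr rfl (fun j _ => hnorm01 j k')]
      rw [Finset.sum_ite, Finset.sum_const, Finset.sum_const]
      push_cast
      simp [Finset.filter_not]
    -- bound the row sum
    have hrow : ∑ j ∈ Finset.univ.erase k, ‖adjM ω k j‖ ≤
        ∑ k' ∈ Finset.univ.filter (fun k' => ω k k' ≠ 0), (Nb - 1) := by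
      calc ∑ j ∈ Finset.univ.erase k, ‖adjM ω k j‖
          ≤ ∑ j ∈ Finset.univ.erase k, ∑ k', ‖ω k k'‖ * ‖ω j k'‖ := by
            apply Finset.sum_le_sum
            intro j hj
            have hjk : k ≠ j := fun h => (Finset.mem_erase.mp hj).1 h.symm
            rw [adjM]
            simp only [Matrix.of_apply, if_neg hjk, norm_neg]
            refine (norm_sum_le _ _).trans (le_of_eq ?_)
            apply Finset.sum_congr rfl
            intro k' _
            rw [norm_mul, RingHomIsometric.norm_map]
        _ = ∑ k', ‖ω k k'‖ * ∑ j ∈ Finset.univ.erase k, ‖ω j k'‖ := by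
            rw [Finset.sum_comm]
            exact Finset.sum_congr rfl (fun k' _ => (Finset.mul_sum _ _ _).symm)
        _ = ∑ k' ∈ Finset.univ.filter (fun k' => ω k k' ≠ 0),
              ‖ω k k'‖ * ∑ j ∈ Finset.univ.erase k, ‖ω j k'‖ := by
            rw [Finset.sum_filter_of_ne]
            intro k' _ h
            intro h0'
            apply h
            rw [h0', norm_zero, zero_mul]
        _ ≤ ∑ k' ∈ Finset.univ.filter (fun k' => ω k k' ≠ 0), (Nb - 1) := by
            apply Finset.sum_le_sum
            intro k' hk'
            have hne : ω k k' ≠ 0 := (Finset.mem_filter.mp hk').2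
            have h1 : ‖ω k k'‖ = 1 := by rw [hnorm01]; simp [hne]
            rw [h1, one_mul]
            have : ∑ j ∈ Finset.univ.erase k, ‖ω j k'‖ = (∑ j, ‖ω j k'‖) - ‖ω k k'‖ :=
              Finset.sum_erase_eq_sub (Finset.mem_univ k)
            rw [this, hcol, h1]
            have : (edgeSize ω k' : ℝ) ≤ Nb := by
              rw [hNb]
              exact_mod_cast Finset.le_sup (f := edgeSize ω) (Finset.mem_univ k')
            linarith
    have hfinal : ∑ k' ∈ Finset.univ.filter (fun k' => ω k k' ≠ 0), (Nb - 1) ≤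
        ((Finset.univ.sup (deg ω) : ℕ) : ℝ) * (Nb - 1) := by
      rw [Finset.sum_const, nsmul_eq_mul]
      apply mul_le_mul_of_nonneg_right _ (by linarith)
      have : deg ω k ≤ Finset.univ.sup (deg ω) := Finset.le_sup (Finset.mem_univ k)
      rw [deg_eq] at this
      exact_mod_cast this
    exact habs.trans (hrow.trans hfinal)
end

section
/- Let S be a nonempty set of vertices of a complex unit hypergraph such that for each v ∈ S the value ω(v, e) is the same nonzero complex unit for all edges e incident to v. Then λ_min(K) ≤ (∑_{k} |e_k ∩ S|²) / |S| ≤ λ_max(K), and, if all degrees are positive, λ_min(L) ≤ (∑_{k} |e_k ∩ S|²) / vol(S) ≤ λ_max(L), where |e_k ∩ S| is the number of vertices of S incident to edge k and vol(S) = ∑_{v ∈ S} deg(v). -/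
open Matrix

/-- The diagonal matrix `D^{-1/2}`. -/
noncomputable def degInvSqrt {n m : ℕ} (ω : Fin n → Fin m → ℂ) :
    Matrix (Fin n) (Fin n) ℂ :=
  Matrix.diagonal fun i => (((Real.sqrt (deg ω i))⁻¹ : ℝ) : ℂ)

/-- The Hermitian normalized Laplacian `𝓛 = D^{-1/2} K D^{-1/2}`, whose eigenvalues are
by definition those of `L = D⁻¹ K`. -/
noncomputable def herLap {n m : ℕ} (ω : Fin n → Fin m → ℂ) : Matrix (Fin n) (Fin n) ℂ :=
  degInvSqrt ω * (incM ω * (incM ω)ᴴ) * degInvSqrt ω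

/-- Smallest eigenvalue of a Hermitian matrix. -/
noncomputable def lamMin {N : ℕ} (hN : 0 < N) {M : Matrix (Fin N) (Fin N) ℂ}
    (h : M.IsHermitian) : ℝ :=
  Finset.univ.inf' (Finset.univ_nonempty_iff.mpr ⟨⟨0, hN⟩⟩) h.eigenvalues

/-- Largest eigenvalue of a Hermitian matrix. -/
noncomputable def lamMax {N : ℕ} (hN : 0 < N) {M : Matrix (Fin N) (Fin N) ℂ}
    (h : M.IsHermitian) : ℝ :=
  Finset.univ.sup' (Finset.univ_nonempty_iff.mpr ⟨⟨0, hN⟩⟩) h.eigenvalues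

lemma star_mul_self_c (z : ℂ) : star z * z = ((‖z‖ ^ 2 : ℝ) : ℂ) := by
  rw [Complex.star_def, ← Complex.normSq_eq_conj_mul_self, Complex.normSq_eq_norm_sq]

lemma dot_star_self (N : ℕ) (z : Fin N → ℂ) :
    star z ⬝ᵥ z = ((∑ i, ‖z i‖ ^ 2 : ℝ) : ℂ) := by
  push_cast
  simp only [dotProduct, Pi.star_apply]
  exact Finset.sum_congr rfl fun i _ => by rw [star_mul_self_c]; norm_cast

/-- Rayleigh-quotient bounds for a Hermitian matrix. -/
lemma rayleigh_bounds {N : ℕ} (hN : 0 < N) {M : Matrix (Fin N) (Fin N) ℂ}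
    (h : M.IsHermitian) (x : Fin N → ℂ) :
    lamMin hN h * (∑ i, ‖x i‖ ^ 2) ≤ (star x ⬝ᵥ M *ᵥ x).re ∧
    (star x ⬝ᵥ M *ᵥ x).re ≤ lamMax hN h * (∑ i, ‖x i‖ ^ 2) := by
  classical
  set U := (h.eigenvectorUnitary : Matrix (Fin N) (Fin N) ℂ) with hU
  set y := (star U) *ᵥ x with hy
  have hvecmul : star x ᵥ* U = star y := by
    funext j
    simp [hy, vecMul, mulVec, dotProduct, star_sum, star_mul', mul_comm]
  have key : star x ⬝ᵥ M *ᵥ x = ∑ i, ((h.eigenvalues i : ℂ) * ((‖y i‖ : ℝ) ^ 2 : ℝ)) := by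
    conv_lhs => rw [h.spectral_theorem, Unitary.conjStarAlgAut_apply]
    rw [← hU, ← mulVec_mulVec, ← mulVec_mulVec, dotProduct_mulVec, hvecmul, ← hy]
    simp only [dotProduct, mulVec_diagonal, Function.comp_apply, Pi.star_apply]
    refine Finset.sum_congr rfl fun i _ => ?_
    rw [mul_comm (star (y i)), mul_assoc, mul_comm (y i), star_mul_self_c]
    norm_cast
    exact (Complex.ofReal_mul _ _).symm
  have normeq : ∑ i, ‖y i‖ ^ 2 = ∑ i, ‖x i‖ ^ 2 := by
    have h1 : star y ⬝ᵥ y = star x ⬝ᵥ x := by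
      rw [hy, star_mulVec, ← Matrix.star_eq_conjTranspose, star_star, ← dotProduct_mulVec,
        mulVec_mulVec,
        show U * star U = 1 from (Matrix.mem_unitaryGroup_iff).mp h.eigenvectorUnitary.2,
        one_mulVec]
    rw [dot_star_self, dot_star_self] at h1
    exact_mod_cast h1
  have keyre : (star x ⬝ᵥ M *ᵥ x).re = ∑ i, h.eigenvalues i * ‖y i‖ ^ 2 := by
    rw [key, Complex.re_sum]
    refine Finset.sum_congr rfl fun i _ => ?_
    norm_cast
  rw [keyre, ← normeq]
  refine ⟨?_, ?_⟩
  · rw [Finset.mul_sum]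
    exact Finset.sum_le_sum fun i _ =>
      mul_le_mul_of_nonneg_right (Finset.inf'_le _ (Finset.mem_univ i)) (sq_nonneg _)
  · rw [Finset.mul_sum]
    exact Finset.sum_le_sum fun i _ =>
      mul_le_mul_of_nonneg_right (Finset.le_sup' _ (Finset.mem_univ i)) (sq_nonneg _)

/-- If every vertex of a nonempty set `S` has a constant incidence label over all edges
incident to it, then `λ_min(K) ≤ (∑_k |e_k ∩ S|²)/|S| ≤ λ_max(K)` and, when all degrees
are positive, `λ_min(L) ≤ (∑_k |e_k ∩ S|²)/vol(S) ≤ λ_max(L)`. -/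
theorem stmt17 (n m : ℕ) (ω : Fin n → Fin m → ℂ)
    (hω : ∀ i k, ω i k = 0 ∨ ‖ω i k‖ = 1)
    (S : Finset (Fin n)) (hS : S.Nonempty)
    (hconst : ∀ i ∈ S, ∀ k k' : Fin m, ω i k ≠ 0 → ω i k' ≠ 0 → ω i k = ω i k')
    (hL : (herLap ω).IsHermitian) :
    (lamMin (Fin.pos hS.choose)
        (Matrix.isHermitian_mul_conjTranspose_self (incM ω)) ≤
      (∑ k : Fin m, ((Nat.card {i : Fin n // i ∈ S ∧ ω i k ≠ 0} : ℝ)) ^ 2) /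
        (S.card : ℝ) ∧
      (∑ k : Fin m, ((Nat.card {i : Fin n // i ∈ S ∧ ω i k ≠ 0} : ℝ)) ^ 2) /
        (S.card : ℝ) ≤
        lamMax (Fin.pos hS.choose)
          (Matrix.isHermitian_mul_conjTranspose_self (incM ω))) ∧
    ((∀ i, 0 < deg ω i) →
      lamMin (Fin.pos hS.choose) hL ≤
        (∑ k : Fin m, ((Nat.card {i : Fin n // i ∈ S ∧ ω i k ≠ 0} : ℝ)) ^ 2) /
          (∑ i ∈ S, (deg ω i : ℝ)) ∧
      (∑ k : Fin m, ((Nat.card {i : Fin n // i ∈ S ∧ ω i k ≠ 0} : ℝ)) ^ 2) /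
          (∑ i ∈ S, (deg ω i : ℝ)) ≤ lamMax (Fin.pos hS.choose) hL) := by
  classical
  have hN : 0 < n := Fin.pos hS.choose
  -- the constant unit value attached to each vertex
  set c : Fin n → ℂ := fun i => if hk : ∃ k, ω i k ≠ 0 then ω i hk.choose else 1 with hc
  have hc_norm : ∀ i, ‖c i‖ = 1 := by
    intro i
    rw [hc]
    by_cases hk : ∃ k, ω i k ≠ 0
    · simp only [dif_pos hk]
      rcases hω i hk.choose with h0 | h1
      · exact absurd h0 hk.choose_spec
      · exact h1
    · simp [dif_neg hk]
  have hc_spec : ∀ i ∈ S, ∀ k, ω i k ≠ 0 → ω i k = c i := by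
    intro i hi k hk
    have hex : ∃ k, ω i k ≠ 0 := ⟨k, hk⟩
    rw [hc]
    simp only [dif_pos hex]
    exact hconst i hi k hex.choose hk hex.choose_spec
  -- the test vector
  set x : Fin n → ℂ := fun i => if i ∈ S then c i else 0 with hx
  -- the cardinality identity
  have hNat : ∀ k, (Nat.card {i : Fin n // i ∈ S ∧ ω i k ≠ 0} : ℝ) =
      ((S.filter fun i => ω i k ≠ 0).card : ℝ) := by
    intro k
    congr 1
    rw [Nat.card_eq_fintype_card, Fintype.card_subtype]
    congr 1
    ext i
    simp [Finset.mem_filter, and_comm]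
  -- the vector z = Bᴴ x and its entries
  set z : Fin m → ℂ := (incM ω)ᴴ *ᵥ x with hz
  have hz_eq : ∀ k, z k = (((S.filter fun i => ω i k ≠ 0).card : ℕ) : ℂ) := by
    intro k
    have e1 : z k = ∑ i, star (ω i k) * x i := by
      rw [hz]
      simp [mulVec, conjTranspose_apply, dotProduct, incM]
    rw [e1]
    have e2 : ∀ i : Fin n, star (ω i k) * x i =
        if i ∈ S then (if ω i k ≠ 0 then (1 : ℂ) else 0) else 0 := by
      intro i
      rw [hx]
      by_cases hi : i ∈ S
      · simp only [if_pos hi]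
        by_cases h0 : ω i k = 0
        · simp [h0]
        · rw [if_pos h0, hc_spec i hi k h0, star_mul_self_c, hc_norm]
          norm_num
      · simp [hi]
    rw [Finset.sum_congr rfl fun i _ => e2 i, Finset.sum_ite_mem, Finset.univ_inter,
      Finset.sum_boole]
  -- the quadratic form of K at x
  have hKquad : star x ⬝ᵥ (incM ω * (incM ω)ᴴ) *ᵥ x = ((∑ k, ‖z k‖ ^ 2 : ℝ) : ℂ) := by
    have hv : star x ᵥ* incM ω = star z := by
      rw [hz, star_mulVec, conjTranspose_conjTranspose]
    rw [← mulVec_mulVec, dotProduct_mulVec, hv, ← hz, dot_star_self]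
  have hnum : (star x ⬝ᵥ (incM ω * (incM ω)ᴴ) *ᵥ x).re =
      ∑ k, (((S.filter fun i => ω i k ≠ 0).card : ℕ) : ℝ) ^ 2 := by
    rw [hKquad, Complex.ofReal_re]
    refine Finset.sum_congr rfl fun k _ => ?_
    rw [hz_eq k, Complex.norm_natCast]
  have hgoalnum : (∑ k : Fin m, ((Nat.card {i : Fin n // i ∈ S ∧ ω i k ≠ 0} : ℝ)) ^ 2)
      = ∑ k, (((S.filter fun i => ω i k ≠ 0).card : ℕ) : ℝ) ^ 2 :=
    Finset.sum_congr rfl fun k _ => by rw [hNat k]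
  have hden : ∑ i, ‖x i‖ ^ 2 = (S.card : ℝ) := by
    rw [hx]
    have e : ∀ i : Fin n, ‖(if i ∈ S then c i else 0 : ℂ)‖ ^ 2 =
        if i ∈ S then (1 : ℝ) else 0 := by
      intro i
      by_cases hi : i ∈ S <;> simp [hi, hc_norm]
    rw [Finset.sum_congr rfl fun i _ => e i, Finset.sum_ite_mem, Finset.univ_inter]
    simp
  have hSpos : (0 : ℝ) < (S.card : ℝ) := by
    exact_mod_cast Finset.card_pos.mpr hS
  obtain ⟨r1, r2⟩ := rayleigh_bounds hN
    (Matrix.isHermitian_mul_conjTranspose_self (incM ω)) x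
  rw [hden, hnum] at r1 r2
  refine ⟨⟨?_, ?_⟩, ?_⟩
  · rw [hgoalnum, le_div_iff₀ hSpos]
    exact r1
  · rw [hgoalnum, div_le_iff₀ hSpos]
    exact r2
  · intro hdeg
    -- the scaled test vector
    set y : Fin n → ℂ := fun i =>
      if i ∈ S then ((Real.sqrt (deg ω i) : ℝ) : ℂ) * c i else 0 with hyv
    have hsqrt_ne : ∀ i, (Real.sqrt (deg ω i)) ≠ 0 := fun i =>
      ne_of_gt (Real.sqrt_pos.mpr (by exact_mod_cast hdeg i))
    have hDy : degInvSqrt ω *ᵥ y = x := by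
      funext i
      rw [degInvSqrt, mulVec_diagonal, hyv, hx]
      by_cases hi : i ∈ S
      · simp only [if_pos hi]
        rw [← mul_assoc, ← Complex.ofReal_mul, inv_mul_cancel₀ (hsqrt_ne i),
          Complex.ofReal_one, one_mul]
      · simp [hi]
    have hDherm : (degInvSqrt ω)ᴴ = degInvSqrt ω := by
      simp [degInvSqrt, diagonal_conjTranspose, Pi.star_def, Complex.conj_ofReal]
    have hstarvm : star y ᵥ* degInvSqrt ω = star x := by
      rw [← hDy, star_mulVec, hDherm]
    have hLquad : star y ⬝ᵥ herLap ω *ᵥ y = star x ⬝ᵥ (incM ω * (incM ω)ᴴ) *ᵥ x := by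
      rw [herLap, ← mulVec_mulVec, ← mulVec_mulVec, hDy, dotProduct_mulVec, hstarvm,
        dotProduct_mulVec]
    have hnum2 : (star y ⬝ᵥ herLap ω *ᵥ y).re =
        ∑ k, (((S.filter fun i => ω i k ≠ 0).card : ℕ) : ℝ) ^ 2 := by
      rw [hLquad, hnum]
    have hden2 : ∑ i, ‖y i‖ ^ 2 = ∑ i ∈ S, (deg ω i : ℝ) := by
      rw [hyv]
      have e : ∀ i : Fin n, ‖(if i ∈ S then ((Real.sqrt (deg ω i) : ℝ) : ℂ) * c i
          else 0 : ℂ)‖ ^ 2 = if i ∈ S then (deg ω i : ℝ) else 0 := by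
        intro i
        by_cases hi : i ∈ S
        · simp only [if_pos hi, norm_mul, Complex.norm_real, hc_norm, mul_one,
            Real.norm_eq_abs, abs_of_nonneg (Real.sqrt_nonneg _)]
          exact Real.sq_sqrt (by positivity)
        · simp [hi]
      rw [Finset.sum_congr rfl fun i _ => e i, Finset.sum_ite_mem, Finset.univ_inter]
    have hvolpos : (0 : ℝ) < ∑ i ∈ S, (deg ω i : ℝ) :=
      Finset.sum_pos (fun i _ => by exact_mod_cast hdeg i) hS
    obtain ⟨s1, s2⟩ := rayleigh_bounds hN hL y
    rw [hden2, hnum2] at s1 s2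
    refine ⟨?_, ?_⟩
    · rw [hgoalnum, le_div_iff₀ hvolpos]
      exact s1
    · rw [hgoalnum, div_le_iff₀ hvolpos]
      exact s2
end
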